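/- The positive roots Ĩ_n of the cubic equation Ĩ³ + 2(Δ/ξ)Ĩ² + (Δ/ξ)²Ĩ − 4Ī³ = 0 (with Δ = Δ₀ − ξĪ, Δ₀ < 0, ξ > 0, Ī > 0) number three real roots when (Δ/(3ξ))³ + Ī³ < 0 and one real root when (Δ/(3ξ))³ + Ī³ > 0; the transition occurs at ξ = ξ_{c2} = −Δ₀/(2Ī). -/

import Mathlib

set_option maxHeartbeats 800000

/-- Root count for the fixed-point cubic of the first-order resonant Hamiltonian:
three real roots when `(Δ/(3ξ))³ + Ibar³ < 0`, one real root when `(Δ/(3ξ))³ + Ibar³ > 0`,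
with the transition at `ξ = ξ_c2 = −Δ₀/(2Ibar)`. -/
theorem first_order_cubic_roots
    (ξ Ibar Δ₀ Δ : ℝ) (hξ : 0 < ξ) (hIbar : 0 < Ibar) (hΔ₀ : Δ₀ < 0)
    (hΔ : Δ = Δ₀ - ξ * Ibar)
    (f : ℝ → ℝ)
    (hf : f = fun I => I ^ 3 + 2 * (Δ / ξ) * I ^ 2 + (Δ / ξ) ^ 2 * I - 4 * Ibar ^ 3) :
    ((Δ / (3 * ξ)) ^ 3 + Ibar ^ 3 < 0 →
        ∃ x y z : ℝ, x ≠ y ∧ x ≠ z ∧ y ≠ z ∧ f x = 0 ∧ f y = 0 ∧ f z = 0) ∧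
    (0 < (Δ / (3 * ξ)) ^ 3 + Ibar ^ 3 → ∃! x : ℝ, f x = 0) ∧
    ((Δ / (3 * ξ)) ^ 3 + Ibar ^ 3 = 0 ↔ ξ = -Δ₀ / (2 * Ibar)) := by
  have hξ' : ξ ≠ 0 := ne_of_gt hξ
  have hΔneg : Δ < 0 := by nlinarith [mul_pos hξ hIbar]
  obtain ⟨a, ha⟩ : ∃ a : ℝ, a = Δ / ξ := ⟨_, rfl⟩
  have haneg : a < 0 := ha ▸ div_neg_of_neg_of_pos hΔneg hξ
  have h3 : Δ / (3 * ξ) = a / 3 := by rw [ha, div_div, mul_comm ξ 3]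
  have hcond : (Δ / (3 * ξ)) ^ 3 + Ibar ^ 3 = (a ^ 3 + 27 * Ibar ^ 3) / 27 := by
    rw [h3]; ring
  have hfe : ∀ I, f I = I * (I + a) ^ 2 - 4 * Ibar ^ 3 := by
    intro I; rw [hf, ← ha]; ring
  have hcont : Continuous f := by rw [hf]; continuity
  have hIb3 : 0 < Ibar ^ 3 := by positivity
  refine ⟨?_, ?_, ?_⟩
  · -- three roots
    intro h
    rw [hcond] at h
    have hA : a ^ 3 + 27 * Ibar ^ 3 < 0 := by linarith
    have h01 : (0:ℝ) ≤ -a/3 := by linarith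
    have h12 : -a/3 ≤ -a := by linarith
    have h23 : -a ≤ -a + 2 * Ibar := by linarith
    have hf0 : f 0 < 0 := by rw [hfe]; nlinarith
    have hf1 : 0 < f (-a/3) := by rw [hfe]; nlinarith
    have hf2 : f (-a) < 0 := by rw [hfe]; nlinarith
    have hf3 : 0 < f (-a + 2 * Ibar) := by rw [hfe]; nlinarith [sq_nonneg Ibar, mul_pos hIbar hIbar]
    obtain ⟨x, hx, hfx⟩ := intermediate_value_Icc h01 hcont.continuousOn
      (Set.mem_Icc.mpr ⟨le_of_lt hf0, le_of_lt hf1⟩)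
    obtain ⟨y, hy, hfy⟩ := intermediate_value_Icc' h12 hcont.continuousOn
      (Set.mem_Icc.mpr ⟨le_of_lt hf2, le_of_lt hf1⟩)
    obtain ⟨z, hz, hfz⟩ := intermediate_value_Icc h23 hcont.continuousOn
      (Set.mem_Icc.mpr ⟨le_of_lt hf2, le_of_lt hf3⟩)
    refine ⟨x, y, z, ?_, ?_, ?_, hfx, hfy, hfz⟩
    · rintro rfl
      have : x = -a/3 := le_antisymm hx.2 hy.1
      rw [this] at hfx; linarith
    · rintro rfl
      have h1 : x ≤ -a/3 := hx.2
      have h2 : -a ≤ x := hz.1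
      have : -a/3 < -a := by linarith
      linarith
    · rintro rfl
      have : y = -a := le_antisymm hy.2 hz.1
      rw [this] at hfy; linarith
  · -- unique root
    intro h
    rw [hcond] at h
    have hA : 0 < a ^ 3 + 27 * Ibar ^ 3 := by linarith
    have h23 : -a ≤ -a + 2 * Ibar := by linarith
    have hf2 : f (-a) < 0 := by rw [hfe]; nlinarith
    have hf3 : 0 < f (-a + 2 * Ibar) := by rw [hfe]; nlinarith [mul_pos hIbar hIbar]
    obtain ⟨x, hx, hfx⟩ := intermediate_value_Icc h23 hcont.continuousOn
      (Set.mem_Icc.mpr ⟨le_of_lt hf2, le_of_lt hf3⟩)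
    have hneg : ∀ w : ℝ, w ≤ -a → f w < 0 := by
      intro w hw
      rw [hfe]
      nlinarith [sq_nonneg (3*w + a), mul_nonpos_of_nonneg_of_nonpos (sq_nonneg (3*w + a))
        (show 3*w + 4*a ≤ 0 by linarith)]
    have hxgt : -a < x := by
      by_contra hc
      push_neg at hc
      have := hneg x hc
      linarith
    refine ⟨x, hfx, ?_⟩
    intro y hfy
    have hygt : -a < y := by
      by_contra hc
      push_neg at hc
      have := hneg y hc
      linarith
    have hs : 0 < x + a := by linarith
    have ht : 0 < y + a := by linarith
    have hex : x * (x + a) ^ 2 = 4 * Ibar ^ 3 := by have := hfx; rw [hfe] at this; linarith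
    have hey : y * (y + a) ^ 2 = 4 * Ibar ^ 3 := by have := hfy; rw [hfe] at this; linarith
    have hfac : (y - x) * ((y+a)^2 + (y+a)*(x+a) + (x+a)^2 - a*((y+a)+(x+a))) = 0 := by
      linear_combination hey - hex
    have hpos : 0 < (y+a)^2 + (y+a)*(x+a) + (x+a)^2 - a*((y+a)+(x+a)) := by
      have h1 : 0 < (y+a)*(x+a) := mul_pos ht hs
      have h2 : a*((y+a)+(x+a)) < 0 := mul_neg_of_neg_of_pos haneg (add_pos ht hs)
      have h4 : 0 < (y+a)^2 := pow_pos ht 2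
      have h5 : 0 < (x+a)^2 := pow_pos hs 2
      linarith
    rcases mul_eq_zero.mp hfac with h0 | h0
    · linarith
    · linarith
  · -- transition
    rw [hcond]
    constructor
    · intro h
      have hA : a ^ 3 + 27 * Ibar ^ 3 = 0 := by linarith
      have hfac : (a + 3 * Ibar) * (a^2 - 3*a*Ibar + 9*Ibar^2) = 0 := by
        linear_combination hA
      have hpos : 0 < a^2 - 3*a*Ibar + 9*Ibar^2 := by
        nlinarith [sq_nonneg (2*a - 3*Ibar), sq_nonneg Ibar]
      have haI : a = -3 * Ibar := by
        rcases mul_eq_zero.mp hfac with h0 | h0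
        · linarith
        · linarith
      have hΔeq : Δ = -3 * Ibar * ξ := by
        have := haI
        rw [ha] at this; rw [div_eq_iff hξ'] at this
        linarith
      rw [hΔ] at hΔeq
      field_simp
      linarith
    · intro hx
      have hΔ0 : Δ₀ = -2 * ξ * Ibar := by
        rw [hx]
        field_simp
      have : a = -3 * Ibar := by
        rw [ha, hΔ, hΔ0, div_eq_iff hξ']
        ring
      rw [this]
      ring
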